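/- (q-ary Johnson bound) Let q ≥ 2 and n ≥ 1 be integers, let 0 ≤ β ≤ 1, and let C ⊆ (Fin n → Fin q) be a code such that every two distinct codewords h₁, h₂ ∈ C satisfy Δ(h₁, h₂) ≥ (1 − 1/q)·(1 − β). Then for every g : Fin n → Fin q, the number of codewords h ∈ C with Δ(g, h) < (1 − 1/q)·(1 − √β) is at most (q − 1)·n + 1. -/

import Mathlib

open Finset RealInnerProductSpace


lemma indep_of_inner {E : Type*} [NormedAddCommGroup E] [InnerProductSpace ℝ E]
    {ι : Type*} [Fintype ι] (u : ι → E) (w : E)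
    (hpos : ∀ i, 0 < ⟪u i, w⟫) (hneg : ∀ i j, i ≠ j → ⟪u i, u j⟫ ≤ 0) :
    LinearIndependent ℝ u := by
  rw [Fintype.linearIndependent_iff]
  intro a ha
  classical
  set P : Finset ι := univ.filter (fun i => 0 < a i) with hP
  set N : Finset ι := univ.filter (fun i => ¬ 0 < a i) with hN
  set v : E := ∑ i ∈ P, a i • u i with hv
  have hv2 : v = -∑ i ∈ N, a i • u i := by
    have := Finset.sum_filter_add_sum_filter_not univ (fun i => 0 < a i) (fun i => a i • u i)
    rw [ha] at this
    rw [hv, eq_neg_iff_add_eq_zero]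
    exact this
  have hvv : ⟪v, v⟫ ≤ 0 := by
    nth_rewrite 2 [hv2]
    rw [hv, inner_neg_right, sum_inner, neg_nonpos]
    apply Finset.sum_nonneg
    intro i hi
    rw [inner_sum]
    apply Finset.sum_nonneg
    intro j hj
    rw [real_inner_smul_left, real_inner_smul_right]
    have hij : i ≠ j := by
      intro h; subst h
      rw [hP] at hi
      rw [hN] at hj
      exact (Finset.mem_filter.mp hj).2 (Finset.mem_filter.mp hi).2
    have h1 : 0 < a i := (Finset.mem_filter.mp hi).2
    have h2 : ¬ 0 < a j := (Finset.mem_filter.mp hj).2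
    have h3 := hneg i j hij
    have := mul_nonneg (neg_nonneg.2 (not_lt.1 h2)) (neg_nonneg.2 h3)
    nlinarith
  have hv0 : v = 0 := by
    have := real_inner_self_nonneg (x := v)
    exact inner_self_eq_zero.mp (le_antisymm hvv this)
  have hPempty : ∀ i ∈ P, a i = 0 := by
    intro i hi
    exfalso
    have h0 : ⟪v, w⟫ = 0 := by rw [hv0, inner_zero_left]
    rw [hv, sum_inner] at h0
    have hpos' : ∀ j ∈ P, 0 < ⟪a j • u j, w⟫ := by
      intro j hj
      rw [real_inner_smul_left]
      exact mul_pos (Finset.mem_filter.mp hj).2 (hpos j)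
    have := Finset.sum_pos hpos' ⟨i, hi⟩
    linarith
  -- now all a i ≤ 0
  have hall : ∀ i, a i ≤ 0 := by
    intro i
    by_cases h : 0 < a i
    · exact le_of_eq (hPempty i (Finset.mem_filter.mpr ⟨Finset.mem_univ i, h⟩))
    · linarith [not_lt.mp h]
  intro i
  have h0 : ⟪(∑ j, a j • u j), w⟫ = 0 := by rw [ha, inner_zero_left]
  rw [sum_inner] at h0
  have hle : ∀ j ∈ univ, ⟪a j • u j, w⟫ ≤ 0 := by
    intro j _
    rw [real_inner_smul_left]
    exact mul_nonpos_of_nonpos_of_nonneg (hall j) (hpos j).le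
  have := (Finset.sum_eq_zero_iff_of_nonpos hle).mp h0 i (Finset.mem_univ i)
  rw [real_inner_smul_left] at this
  rcases mul_eq_zero.mp this with h | h
  · exact h
  · exact absurd h (ne_of_gt (hpos i))

/-- Fractional Hamming distance between two words of length `n`. -/
noncomputable def fracDist {n q : ℕ} (f g : Fin n → Fin q) : ℝ :=
  (hammingDist f g : ℝ) / n

section
variable (q n : ℕ)

noncomputable def chi (f : Fin n → Fin q) : EuclideanSpace ℝ (Fin n × Fin q) :=
  WithLp.toLp 2 (fun p : Fin n × Fin q => if f p.1 = p.2 then (1:ℝ) else 0)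

noncomputable def unif : EuclideanSpace ℝ (Fin n × Fin q) := WithLp.toLp 2 (fun _ => (1:ℝ) / q)

variable {q n}

lemma inner_chi_chi (f h : Fin n → Fin q) :
    ⟪chi q n f, chi q n h⟫ = (n : ℝ) - hammingDist f h := by
  rw [PiLp.inner_apply]
  have : ∀ p : Fin n × Fin q, ⟪chi q n f p, chi q n h p⟫ =
      if f p.1 = p.2 ∧ h p.1 = p.2 then (1:ℝ) else 0 := by
    intro p
    simp only [chi, PiLp.toLp_apply, RCLike.inner_apply, conj_trivial]
    by_cases h1 : f p.1 = p.2 <;> by_cases h2 : h p.1 = p.2 <;> simp [h1, h2]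
  rw [Finset.sum_congr rfl (fun p _ => this p)]
  rw [Fintype.sum_prod_type]
  have hrow : ∀ i : Fin n, (∑ a : Fin q, if f i = a ∧ h i = a then (1:ℝ) else 0) =
      if f i = h i then 1 else 0 := by
    intro i
    by_cases hfh : f i = h i
    · rw [Finset.sum_eq_single (f i)]
      · simp [hfh]
      · intro b _ hb; rw [if_neg]; rintro ⟨h1,h2⟩; exact hb (h1.symm)
      · simp
    · rw [if_neg hfh]
      apply Finset.sum_eq_zero
      intro a _
      rw [if_neg]
      rintro ⟨h1, h2⟩; exact hfh (h1.trans h2.symm)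
  rw [Finset.sum_congr rfl (fun i _ => hrow i)]
  have : hammingDist f h = (univ.filter (fun i => f i ≠ h i)).card := rfl
  rw [this]
  rw [Finset.sum_boole]
  have hsplit := Finset.card_filter_add_card_filter_not (s := (univ : Finset (Fin n)))
    (p := fun i => f i = h i)
  push_cast
  have hle : (univ.filter (fun i => f i = h i)).card + (univ.filter (fun i => ¬ f i = h i)).card = n := by
    simpa using hsplit
  push_cast [← hle]
  ring

lemma inner_chi_unif (f : Fin n → Fin q) (hq : 1 ≤ q) :
    ⟪chi q n f, unif q n⟫ = (n : ℝ) / q := by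
  rw [PiLp.inner_apply]
  have : ∀ p : Fin n × Fin q, ⟪chi q n f p, unif q n p⟫ =
      if f p.1 = p.2 then (1:ℝ)/q else 0 := by
    intro p
    simp only [chi, unif, PiLp.toLp_apply, RCLike.inner_apply, conj_trivial]
    by_cases h1 : f p.1 = p.2 <;> simp [h1]
  rw [Finset.sum_congr rfl (fun p _ => this p), Fintype.sum_prod_type]
  have hrow : ∀ i : Fin n, (∑ a : Fin q, if f i = a then (1:ℝ)/q else 0) = 1/q := by
    intro i
    rw [Finset.sum_eq_single (f i)]
    · simp
    · intro b _ hb; rw [if_neg (fun h => hb h.symm)]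
    · simp
  rw [Finset.sum_congr rfl (fun i _ => hrow i)]
  simp
  ring

lemma inner_unif_unif (hq : 1 ≤ q) : ⟪unif q n, unif q n⟫ = (n : ℝ) / q := by
  rw [PiLp.inner_apply]
  have : ∀ p : Fin n × Fin q, ⟪unif q n p, unif q n p⟫ = 1/(q*q : ℝ) := by
    intro p
    simp only [unif, PiLp.toLp_apply, RCLike.inner_apply, conj_trivial]
    rw [div_mul_div_comm, one_mul]
  rw [Finset.sum_congr rfl (fun p _ => this p)]
  simp only [Finset.sum_const, Finset.card_univ, Fintype.card_prod, Fintype.card_fin,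
    nsmul_eq_mul]
  have hq0 : (q : ℝ) ≠ 0 := by positivity
  push_cast
  field_simp

lemma block_sum_chi (f : Fin n → Fin q) (i : Fin n) :
    ∑ a : Fin q, chi q n f (i, a) = 1 := by
  simp only [chi, PiLp.toLp_apply]
  rw [Finset.sum_eq_single (f i)]
  · simp
  · intro b _ hb; rw [if_neg (fun h => hb h.symm)]
  · simp

lemma block_sum_unif (hq : 1 ≤ q) (i : Fin n) :
    ∑ a : Fin q, unif q n (i, a) = 1 := by
  simp only [unif, PiLp.toLp_apply, Finset.sum_const, Finset.card_univ, Fintype.card_fin, nsmul_eq_mul]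
  have hq0 : (q : ℝ) ≠ 0 := by positivity
  field_simp

noncomputable def blockSum : EuclideanSpace ℝ (Fin n × Fin q) →ₗ[ℝ] (Fin n → ℝ) where
  toFun v := fun i => ∑ a : Fin q, v (i, a)
  map_add' v w := by funext i; exact Finset.sum_add_distrib
  map_smul' c v := by
    funext i
    simp only [RingHom.id_apply, Pi.smul_apply, smul_eq_mul]
    rw [Finset.mul_sum]
    rfl

lemma blockSum_surjective (hq : 1 ≤ q) :
    Function.Surjective (blockSum : EuclideanSpace ℝ (Fin n × Fin q) →ₗ[ℝ] (Fin n → ℝ)) := by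
  intro f
  refine ⟨(WithLp.toLp 2 (fun p : Fin n × Fin q => f p.1 / q) : EuclideanSpace ℝ (Fin n × Fin q)), ?_⟩
  funext i
  have hq0 : (q : ℝ) ≠ 0 := by positivity
  simp only [blockSum, LinearMap.coe_mk, AddHom.coe_mk, PiLp.toLp_apply]
  rw [Finset.sum_const]
  simp only [Finset.card_univ, Fintype.card_fin, nsmul_eq_mul]
  field_simp

lemma finrank_ker_blockSum (hq : 1 ≤ q) :
    Module.finrank ℝ (LinearMap.ker (blockSum : EuclideanSpace ℝ (Fin n × Fin q) →ₗ[ℝ] (Fin n → ℝ)))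
      = n * (q - 1) := by
  have h := LinearMap.finrank_range_add_finrank_ker
    (blockSum : EuclideanSpace ℝ (Fin n × Fin q) →ₗ[ℝ] (Fin n → ℝ))
  have hr : LinearMap.range (blockSum : EuclideanSpace ℝ (Fin n × Fin q) →ₗ[ℝ] (Fin n → ℝ)) = ⊤ :=
    LinearMap.range_eq_top.mpr (blockSum_surjective hq)
  have h1 : Module.finrank ℝ (LinearMap.range (blockSum : EuclideanSpace ℝ (Fin n × Fin q) →ₗ[ℝ] (Fin n → ℝ))) = n := by
    rw [hr, finrank_top]
    simp [Module.finrank_pi]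
  have h2 : Module.finrank ℝ (EuclideanSpace ℝ (Fin n × Fin q)) = n * q := by
    rw [finrank_euclideanSpace]; simp
  rw [h1, h2] at h
  have e : n * q = n * (q - 1) + n := by
    have hq1 : q - 1 + 1 = q := Nat.succ_pred_eq_of_pos hq
    calc n * q = n * ((q - 1) + 1) := by rw [hq1]
    _ = n * (q - 1) + n := by ring
  omega

lemma inner_unif_chi (f : Fin n → Fin q) (hq : 1 ≤ q) :
    ⟪unif q n, chi q n f⟫ = (n : ℝ) / q := by
  rw [real_inner_comm]
  exact inner_chi_unif f hq

lemma inner_centered (hq : 1 ≤ q) (f h : Fin n → Fin q) :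
    ⟪chi q n f - unif q n, chi q n h - unif q n⟫
      = (n : ℝ) - hammingDist f h - n / q := by
  rw [inner_sub_left, inner_sub_right, inner_sub_right, inner_chi_chi,
    inner_chi_unif _ hq, inner_unif_unif hq, inner_unif_chi _ hq]
  ring

lemma centered_mem_ker (hq : 1 ≤ q) (f : Fin n → Fin q) :
    chi q n f - unif q n ∈
      LinearMap.ker (blockSum : EuclideanSpace ℝ (Fin n × Fin q) →ₗ[ℝ] (Fin n → ℝ)) := by
  rw [LinearMap.mem_ker, map_sub]
  funext i
  have h1 : blockSum (chi q n f) i = 1 := block_sum_chi f i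
  have h2 : blockSum (unif q n) i = 1 := block_sum_unif hq i
  simp only [Pi.sub_apply, Pi.zero_apply, h1, h2, sub_self]

lemma inner_u_u (hq : 1 ≤ q) (α : ℝ) (g f h : Fin n → Fin q) :
    ⟪(chi q n f - unif q n) - α • (chi q n g - unif q n),
     (chi q n h - unif q n) - α • (chi q n g - unif q n)⟫
    = ((n:ℝ) - hammingDist f h - n/q) - α * ((n:ℝ) - hammingDist f g - n/q)
      - α * ((n:ℝ) - hammingDist g h - n/q) + α^2 * ((n:ℝ) - n/q) := by
  simp only [inner_sub_left, inner_sub_right, real_inner_smul_left, real_inner_smul_right,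
    inner_chi_chi, inner_chi_unif _ hq, inner_unif_chi _ hq, inner_unif_unif hq,
    hammingDist_self]
  push_cast
  ring

lemma inner_u_w (hq : 1 ≤ q) (α : ℝ) (g f : Fin n → Fin q) :
    ⟪(chi q n f - unif q n) - α • (chi q n g - unif q n), chi q n g - unif q n⟫
    = ((n:ℝ) - hammingDist f g - n/q) - α * ((n:ℝ) - n/q) := by
  simp only [inner_sub_left, inner_sub_right, real_inner_smul_left, real_inner_smul_right,
    inner_chi_chi, inner_chi_unif _ hq, inner_unif_chi _ hq, inner_unif_unif hq,
    hammingDist_self]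
  push_cast
  ring

end

/-- **q-ary Johnson bound.** If a code `C ⊆ [q]^n` has minimum fractional distance at least
`(1 - 1/q)(1 - β)`, then for every received word `g` the number of codewords within
fractional distance `(1 - 1/q)(1 - √β)` of `g` is at most `(q-1)·n + 1`. -/
theorem johnson_bound (q n : ℕ) (hq : 2 ≤ q) (hn : 1 ≤ n)
    (β : ℝ) (hβ0 : 0 ≤ β) (hβ1 : β ≤ 1)
    (C : Set (Fin n → Fin q))
    (hdist : ∀ h₁ ∈ C, ∀ h₂ ∈ C, h₁ ≠ h₂ →
      (1 - 1 / (q : ℝ)) * (1 - β) ≤ fracDist h₁ h₂)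
    (g : Fin n → Fin q) :
    Set.ncard {h | h ∈ C ∧ fracDist g h < (1 - 1 / (q : ℝ)) * (1 - Real.sqrt β)}
      ≤ (q - 1) * n + 1 := by
  classical
  have hq1 : 1 ≤ q := le_trans (by norm_num) hq
  have hq0 : (0:ℝ) < q := by exact_mod_cast Nat.lt_of_lt_of_le (by norm_num) hq
  have hn0 : (0:ℝ) < n := by exact_mod_cast hn
  set α : ℝ := Real.sqrt β with hα
  have hα0 : 0 ≤ α := Real.sqrt_nonneg β
  have hα2 : α ^ 2 = β := Real.sq_sqrt hβ0
  set c : ℝ := 1 - 1 / q with hc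
  have hc0 : 0 < c := by
    rw [hc, sub_pos, div_lt_one hq0]
    exact_mod_cast Nat.lt_of_lt_of_le (by norm_num) hq
  set S : Set (Fin n → Fin q) :=
    {h | h ∈ C ∧ fracDist g h < c * (1 - α)} with hS
  have hdist' : ∀ f h : Fin n → Fin q, (hammingDist f h : ℝ) = fracDist f h * n := by
    intro f h
    rw [fracDist, div_mul_cancel₀]
    exact ne_of_gt hn0
  -- the codeword vectors, living in the kernel of blockSum
  set K := LinearMap.ker (blockSum : EuclideanSpace ℝ (Fin n × Fin q) →ₗ[ℝ] (Fin n → ℝ))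
    with hK
  have humem : ∀ h : Fin n → Fin q,
      (chi q n h - unif q n) - α • (chi q n g - unif q n) ∈ K :=
    fun h => Submodule.sub_mem _ (centered_mem_ker hq1 h)
      (Submodule.smul_mem _ _ (centered_mem_ker hq1 g))
  haveI : Fintype ↥S := S.toFinite.fintype
  set U : ↥S → ↥K := fun h =>
    ⟨(chi q n h.1 - unif q n) - α • (chi q n g - unif q n), humem h.1⟩ with hU
  set W : ↥K := ⟨chi q n g - unif q n, centered_mem_ker hq1 g⟩ with hW
  -- auxiliary distance bounds
  have hball : ∀ h ∈ S, (n:ℝ) * (c * α) < (n:ℝ) - hammingDist g h - n/q := by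
    intro h hh
    have hlt : fracDist g h < c * (1 - α) := hh.2
    have h2 := mul_lt_mul_of_pos_left hlt hn0
    have heq : (n:ℝ) - hammingDist g h - n/q = n * (c - fracDist g h) := by
      rw [hdist' g h, hc]; ring
    rw [heq]
    linarith
  have hupos : ∀ i : ↥S, 0 < ⟪U i, W⟫ := by
    intro i
    rw [hU, hW]
    rw [Submodule.coe_inner]
    simp only
    rw [inner_u_w hq1, hammingDist_comm]
    have h1 := hball i.1 i.2
    have hnc : (n:ℝ) - n/q = n * c := by rw [hc]; ring
    rw [hnc]
    nlinarith
  have huneg : ∀ i j : ↥S, i ≠ j → ⟪U i, U j⟫ ≤ 0 := by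
    intro i j hij
    have hne : i.1 ≠ j.1 := fun hEq => hij (Subtype.ext hEq)
    rw [hU]
    rw [Submodule.coe_inner]
    simp only
    rw [inner_u_u hq1]
    have key : (n:ℝ) - hammingDist i.1 j.1 - n / q ≤ n * (c * α^2) := by
      have hd := hdist i.1 i.2.1 j.1 j.2.1 hne
      rw [← hα2] at hd
      have heq : (n:ℝ) - hammingDist i.1 j.1 - n/q = n * (c - fracDist i.1 j.1) := by
        rw [hdist' i.1 j.1, hc]; ring
      rw [heq]
      have h2 := mul_le_mul_of_nonneg_left hd (le_of_lt hn0)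
      linarith
    have h1w : (n:ℝ) * (c * α) < (n:ℝ) - hammingDist g i.1 - n/q := hball i.1 i.2
    have h2w : (n:ℝ) * (c * α) < (n:ℝ) - hammingDist g j.1 - n/q := hball j.1 j.2
    have h1w' : (n:ℝ) * (c * α) < (n:ℝ) - hammingDist i.1 g - n/q := by
      rw [hammingDist_comm]; exact h1w
    have hnc : (n:ℝ) - n/q = n * c := by rw [hc]; ring
    rw [hnc]
    linarith [mul_le_mul_of_nonneg_left h1w'.le hα0,
      mul_le_mul_of_nonneg_left h2w.le hα0, hα2]
  have hind : LinearIndependent ℝ U := indep_of_inner U W hupos huneg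
  have hcard : Fintype.card ↥S ≤ Module.finrank ℝ ↥K :=
    hind.fintype_card_le_finrank
  have hfr : Module.finrank ℝ ↥K = n * (q - 1) := finrank_ker_blockSum hq1
  have hncard : S.ncard = Fintype.card ↥S := by
    rw [Set.ncard_eq_toFinset_card']
    exact Set.toFinset_card S
  calc S.ncard = Fintype.card ↥S := hncard
    _ ≤ n * (q-1) := hfr ▸ hcard
    _ ≤ (q-1) * n + 1 := by rw [Nat.mul_comm]; omega
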